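/- arXiv:1110.3077 — 3 statements merged into one kernel-verified Lean document; each statement's English description precedes it below -/
import Mathlib

section
/- Let G be a simple graph on a nonempty finite vertex set V and let O and P be acyclic orientations of G. For an ordered set partition C = (S_1,…,S_k) of V into nonempty blocks, let or(C,O) be the orientation of G directing each edge uv with u ∈ S_i, v ∈ S_j, i < j, from u to v, and agreeing with O on edges with both endpoints in the same block; let r(C,O) be the number of directed edges (u,v) of O with u ∈ S_j and v ∈ S_i for some i < j. Then, as an identity in the polynomial ring ℤ[q], the sum over all ordered set partitions C of V into nonempty blocks with or(C,O) = P of (-1)^k q^{r(C,O)} (where k is the number of blocks of C) equals (-1)^{|V|} q^{e(G)} if P is the reverse orientation of O, and equals 0 otherwise. Here e(G) is the number of edges of G. -/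
namespace GraphSpecies

variable {V : Type*}

def IsOrientationOn (G : SimpleGraph V) (S : Set V) (O : V → V → Prop) : Prop :=
  (∀ u v, O u v → u ∈ S ∧ v ∈ S ∧ G.Adj u v) ∧
  (∀ u v, u ∈ S → v ∈ S → G.Adj u v → O u v ∨ O v u) ∧
  (∀ u v, ¬ (O u v ∧ O v u))

def IsAcyclicOrientationOn (G : SimpleGraph V) (S : Set V) (O : V → V → Prop) : Prop :=
  IsOrientationOn G S O ∧ Irreflexive (Relation.TransGen O)

def restrictO (O : V → V → Prop) (A : Set V) : V → V → Prop :=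
  fun u v => O u v ∧ u ∈ A ∧ v ∈ A

def prodO (G : SimpleGraph V) (S T : Set V) (O P : V → V → Prop) : V → V → Prop :=
  fun u v => O u v ∨ P u v ∨ (u ∈ S ∧ v ∈ T ∧ G.Adj u v)

def flipO (O : V → V → Prop) : V → V → Prop := fun u v => O v u

noncomputable def eCount (O : V → V → Prop) (A B : Set V) : ℕ :=
  {p : V × V | O p.1 p.2 ∧ p.1 ∈ A ∧ p.2 ∈ B}.ncard

noncomputable def eCross (G : SimpleGraph V) (A B : Set V) : ℕ :=
  {p : V × V | G.Adj p.1 p.2 ∧ p.1 ∈ A ∧ p.2 ∈ B}.ncard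

def IsComposition [DecidableEq V] (X : Finset V) (C : List (Finset V)) : Prop :=
  (∀ B ∈ C, B.Nonempty) ∧ C.Pairwise Disjoint ∧ C.foldr (· ∪ ·) ∅ = X

def earlier (C : List (Finset V)) (u v : V) : Prop :=
  ∃ i j : Fin C.length, i < j ∧ u ∈ C.get i ∧ v ∈ C.get j

def sameBlock (C : List (Finset V)) (u v : V) : Prop :=
  ∃ i : Fin C.length, u ∈ C.get i ∧ v ∈ C.get i

def restrictC [DecidableEq V] (C : List (Finset V)) (S : Finset V) : List (Finset V) :=
  (C.map (· ∩ S)).filter fun B => B.Nonempty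

def IsStableComposition [DecidableEq V] (G : SimpleGraph V) (S : Finset V)
    (C : List (Finset V)) : Prop :=
  IsComposition S C ∧ ∀ B ∈ C, ∀ u ∈ B, ∀ v ∈ B, ¬ G.Adj u v

def edgeRestrict (F : Set (Sym2 V)) (S : Set V) : Set (Sym2 V) :=
  {e | e ∈ F ∧ ∀ v ∈ e, v ∈ S}

def IsFlatOn (G : SimpleGraph V) (S : Set V) (F : Set (Sym2 V)) : Prop :=
  F ⊆ G.edgeSet ∧ (∀ e ∈ F, ∀ v ∈ e, v ∈ S) ∧
  ∀ u v, u ∈ S → v ∈ S → G.Adj u v →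
    (SimpleGraph.fromEdgeSet F).Reachable u v → s(u, v) ∈ F

def IsLinList (ℓ : List V) : Prop := ℓ.Nodup ∧ ∀ v : V, v ∈ ℓ

def after [DecidableEq V] (ℓ : List V) (u v : V) : Prop :=
  ℓ.idxOf v < ℓ.idxOf u

def linOfComp [DecidableEq V] (ℓ : List V) (C : List (Finset V)) : List V :=
  (C.map fun B => ℓ.filter fun v => v ∈ B).flatten


def orC (G : SimpleGraph V) (C : List (Finset V)) (O : V → V → Prop) : V → V → Prop :=
  fun u v => (G.Adj u v ∧ earlier C u v) ∨ (O u v ∧ sameBlock C u v)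

noncomputable def rC (C : List (Finset V)) (O : V → V → Prop) : ℕ :=
  {p : V × V | O p.1 p.2 ∧ earlier C p.2 p.1}.ncard

section AuxProof

attribute [local instance] Classical.propDecidable

variable [Fintype V] [DecidableEq V]
variable (G : SimpleGraph V) (O P : V → V → Prop)

def allA (S : Finset V) : Prop := ∀ u ∈ S, ∀ v ∈ S, O u v → P u v

def allD (S : Finset V) : Prop := ∀ u ∈ S, ∀ v ∈ S, O u v → P v u

def fwdP (S T : Finset V) : Prop := ∀ u ∈ S, ∀ v ∈ T, G.Adj u v → P u v

def upC (W T : Finset V) : Prop := ∀ u ∈ T, ∀ v ∈ W, P u v → v ∈ T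

noncomputable def famT (W : Finset V) : Finset (Finset V) :=
  W.powerset.filter (fun T => upC P W T ∧ allD O P T ∧ allA O P (W \ T))

lemma mem_famT {W T : Finset V} :
    T ∈ famT O P W ↔ T ⊆ W ∧ upC P W T ∧ allD O P T ∧ allA O P (W \ T) := by
  simp [famT, Finset.mem_filter, Finset.mem_powerset, and_assoc]

variable {G O P}

lemma or_adj (hO : IsAcyclicOrientationOn G Set.univ O) {u v : V} (h : O u v) : G.Adj u v :=
  (hO.1.1 u v h).2.2

lemma or_tot (hO : IsAcyclicOrientationOn G Set.univ O) {u v : V} (h : G.Adj u v) :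
    O u v ∨ O v u :=
  hO.1.2.1 u v (Set.mem_univ u) (Set.mem_univ v) h

lemma or_nb (hO : IsAcyclicOrientationOn G Set.univ O) {u v : V} (h : O u v) (h' : O v u) :
    False :=
  hO.1.2.2 u v ⟨h, h'⟩

lemma exists_src (hO : IsAcyclicOrientationOn G Set.univ O) {W : Finset V} (hne : W.Nonempty) :
    ∃ v ∈ W, ∀ u ∈ W, ¬ O u v := by
  haveI : IsTrans V (Relation.TransGen O) := ⟨fun _ _ _ => Relation.TransGen.trans⟩
  haveI : IsIrrefl V (Relation.TransGen O) := ⟨hO.2⟩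
  obtain ⟨v, hv, hmin⟩ :=
    (Finite.wellFounded_of_trans_of_irrefl (Relation.TransGen O)).has_min (↑W : Set V)
      ⟨hne.choose, hne.choose_spec⟩
  exact ⟨v, hv, fun u hu hOuv => hmin u hu (Relation.TransGen.single hOuv)⟩

lemma KL (hO : IsAcyclicOrientationOn G Set.univ O) (hP : IsAcyclicOrientationOn G Set.univ P) :
    ∀ (n : ℕ) (W : Finset V), W.card ≤ n → W.Nonempty →
      ∑ T ∈ famT O P W, (-1 : ℤ) ^ T.card = 0 := by
  intro n
  induction n with
  | zero =>
    intro W hcard hne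
    have : W = ∅ := Finset.card_eq_zero.mp (Nat.le_zero.mp hcard)
    simp [this] at hne
  | succ n ih =>
    intro W hcard hne
    obtain ⟨v, hvW, hvsrc⟩ := exists_src hO hne
    have hOv : ∀ u ∈ W, G.Adj v u → O v u := fun u hu hadj =>
      (or_tot hO hadj).resolve_right (hvsrc u hu)
    set W' := W.erase v with hW'
    have hcard' : W'.card ≤ n := by
      have h1 : W'.card = W.card - 1 := by rw [hW']; exact Finset.card_erase_of_mem hvW
      have h2 := Finset.card_pos.mpr hne
      omega
    by_cases hA : ∃ u ∈ W, G.Adj v u ∧ P v u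
    · by_cases hD : ∃ u ∈ W, G.Adj v u ∧ P u v
      · -- mixed: family is empty
        obtain ⟨u1, hu1W, hu1adj, hu1P⟩ := hA
        obtain ⟨u2, hu2W, hu2adj, hu2P⟩ := hD
        have hemp : famT O P W = ∅ := by
          apply Finset.eq_empty_of_forall_notMem
          intro T hT
          rw [mem_famT] at hT
          obtain ⟨hTW, hup, hD', hA'⟩ := hT
          have hvT : v ∉ T := by
            intro hvT
            have hu1T : u1 ∈ T := hup v hvT u1 hu1W hu1P
            exact or_nb hP (hD' v hvT u1 hu1T (hOv u1 hu1W hu1adj)) hu1P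
          by_cases hu2T : u2 ∈ T
          · exact hvT (hup u2 hu2T v hvW hu2P)
          · have h1 : v ∈ W \ T := Finset.mem_sdiff.mpr ⟨hvW, hvT⟩
            have h2 : u2 ∈ W \ T := Finset.mem_sdiff.mpr ⟨hu2W, hu2T⟩
            exact or_nb hP (hA' v h1 u2 h2 (hOv u2 hu2W hu2adj)) hu2P
        simp [hemp]
      · -- all incident edges agree (P v u); famT W = famT W'
        push_neg at hD
        have hAall : ∀ u ∈ W, G.Adj v u → P v u := fun u hu hadj =>
          (or_tot hP hadj).resolve_right (hD u hu hadj)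
        obtain ⟨u0, hu0W, hu0adj, _⟩ := hA
        have hW'ne : W'.Nonempty := ⟨u0, Finset.mem_erase.mpr ⟨(hu0adj.ne).symm, hu0W⟩⟩
        have hfam : famT O P W = famT O P W' := by
          ext T
          rw [mem_famT, mem_famT]
          constructor
          · rintro ⟨hTW, hup, hD', hA'⟩
            have hvT : v ∉ T := by
              intro hvT
              have hu0T : u0 ∈ T := hup v hvT u0 hu0W (hAall u0 hu0W hu0adj)
              exact or_nb hP (hD' v hvT u0 hu0T (hOv u0 hu0W hu0adj)) (hAall u0 hu0W hu0adj)
            refine ⟨fun x hx => Finset.mem_erase.mpr ⟨fun h => hvT (h ▸ hx), hTW hx⟩,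
              fun u hu w hw hPuw => hup u hu w (Finset.mem_of_mem_erase hw) hPuw,
              hD', fun u hu w hw hOuw => hA' u ?_ w ?_ hOuw⟩
            · rw [Finset.mem_sdiff] at hu ⊢
              exact ⟨Finset.mem_of_mem_erase hu.1, hu.2⟩
            · rw [Finset.mem_sdiff] at hw ⊢
              exact ⟨Finset.mem_of_mem_erase hw.1, hw.2⟩
          · rintro ⟨hTW, hup, hD', hA'⟩
            have hvT : v ∉ T := fun h => (Finset.mem_erase.mp (hTW h)).1 rfl
            refine ⟨fun x hx => Finset.mem_of_mem_erase (hTW hx), ?_, hD', ?_⟩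
            · intro u hu w hw hPuw
              by_cases hwv : w = v
              · subst hwv
                have hadj : G.Adj w u := (hP.1.1 u w hPuw).2.2.symm
                exact absurd (hAall u (Finset.mem_of_mem_erase (hTW hu)) hadj) fun h =>
                  or_nb hP h hPuw
              · exact hup u hu w (Finset.mem_erase.mpr ⟨hwv, hw⟩) hPuw
            · intro u hu w hw hOuw
              rw [Finset.mem_sdiff] at hu hw
              by_cases huv : u = v
              · subst huv
                exact hAall w hw.1 (or_adj hO hOuw)
              · by_cases hwv : w = v
                · subst hwv
                  exact absurd hOuw (hvsrc u hu.1)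
                · exact hA' u (Finset.mem_sdiff.mpr ⟨Finset.mem_erase.mpr ⟨huv, hu.1⟩, hu.2⟩)
                    w (Finset.mem_sdiff.mpr ⟨Finset.mem_erase.mpr ⟨hwv, hw.1⟩, hw.2⟩) hOuw
        rw [hfam]
        exact ih W' hcard' hW'ne
    · push_neg at hA
      by_cases hD : ∃ u ∈ W, G.Adj v u ∧ P u v
      · -- all incident edges disagree; v belongs to every member
        have hDall : ∀ u ∈ W, G.Adj v u → P u v := fun u hu hadj =>
          (or_tot hP hadj).resolve_left (hA u hu hadj)
        obtain ⟨u0, hu0W, hu0adj, _⟩ := hD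
        have hW'ne : W'.Nonempty := ⟨u0, Finset.mem_erase.mpr ⟨(hu0adj.ne).symm, hu0W⟩⟩
        have hvmem : ∀ T ∈ famT O P W, v ∈ T := by
          intro T hT
          rw [mem_famT] at hT
          obtain ⟨hTW, hup, hD', hA'⟩ := hT
          by_contra hvT
          by_cases hu0T : u0 ∈ T
          · exact hvT (hup u0 hu0T v hvW (hDall u0 hu0W hu0adj))
          · exact or_nb hP
              (hA' v (Finset.mem_sdiff.mpr ⟨hvW, hvT⟩) u0 (Finset.mem_sdiff.mpr ⟨hu0W, hu0T⟩)
                (hOv u0 hu0W hu0adj))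
              (hDall u0 hu0W hu0adj)
        have hnoPout : ∀ w ∈ W, ¬ P v w := by
          intro w hw hPvw
          have hadj : G.Adj v w := (hP.1.1 v w hPvw).2.2
          exact or_nb hP hPvw (hDall w hw hadj)
        have hbij : ∑ T ∈ famT O P W, (-1 : ℤ) ^ T.card
            = ∑ T' ∈ famT O P W', (-1 : ℤ) ^ (T'.card + 1) := by
          refine Finset.sum_bij' (fun T _ => T.erase v) (fun T' _ => insert v T') ?_ ?_ ?_ ?_ ?_
          · intro T hT
            have hvT := hvmem T hT
            rw [mem_famT] at hT
            obtain ⟨hTW, hup, hD', hA'⟩ := hT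
            have hsd : W' \ T.erase v = W \ T := by
              ext x
              simp only [Finset.mem_sdiff, Finset.mem_erase, hW']
              constructor
              · rintro ⟨⟨hxv, hxW⟩, hx⟩
                exact ⟨hxW, fun hxT => hx ⟨hxv, hxT⟩⟩
              · rintro ⟨hxW, hxT⟩
                exact ⟨⟨fun h => hxT (h ▸ hvT), hxW⟩, fun h => hxT h.2⟩
            rw [mem_famT]
            refine ⟨fun x hx => Finset.mem_erase.mpr
                ⟨(Finset.mem_erase.mp hx).1, hTW (Finset.mem_of_mem_erase hx)⟩, ?_, ?_, ?_⟩
            · intro u hu w hw hPuw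
              exact Finset.mem_erase.mpr ⟨(Finset.mem_erase.mp hw).1,
                hup u (Finset.mem_of_mem_erase hu) w (Finset.mem_of_mem_erase hw) hPuw⟩
            · exact fun u hu w hw h =>
                hD' u (Finset.mem_of_mem_erase hu) w (Finset.mem_of_mem_erase hw) h
            · rw [hsd]; exact hA'
          · intro T' hT'
            rw [mem_famT] at hT'
            obtain ⟨hTW, hup, hD', hA'⟩ := hT'
            have hvT' : v ∉ T' := fun h => (Finset.mem_erase.mp (hTW h)).1 rfl
            have hsd2 : W \ insert v T' = W' \ T' := by
              ext x
              simp only [Finset.mem_sdiff, Finset.mem_erase, Finset.mem_insert, hW']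
              constructor
              · rintro ⟨hxW, hx⟩
                exact ⟨⟨fun h => hx (Or.inl h), hxW⟩, fun h => hx (Or.inr h)⟩
              · rintro ⟨⟨hxv, hxW⟩, hx⟩
                exact ⟨hxW, fun h => h.elim hxv hx⟩
            rw [mem_famT]
            refine ⟨?_, ?_, ?_, ?_⟩
            · intro x hx
              rcases Finset.mem_insert.mp hx with h | h
              · exact h ▸ hvW
              · exact Finset.mem_of_mem_erase (hTW h)
            · intro u hu w hw hPuw
              rcases Finset.mem_insert.mp hu with h | h
              · exact absurd hPuw (h ▸ hnoPout w hw)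
              · by_cases hwv : w = v
                · exact Finset.mem_insert.mpr (Or.inl hwv)
                · exact Finset.mem_insert.mpr
                    (Or.inr (hup u h w (Finset.mem_erase.mpr ⟨hwv, hw⟩) hPuw))
            · intro u hu w hw hOuw
              rcases Finset.mem_insert.mp hu with h1 | h1
              · subst h1
                rcases Finset.mem_insert.mp hw with h2 | h2
                · exact absurd (or_adj hO (h2 ▸ hOuw)) (G.irrefl)
                · exact hDall w (Finset.mem_of_mem_erase (hTW h2)) (or_adj hO hOuw)
              · rcases Finset.mem_insert.mp hw with h2 | h2
                · subst h2
                  exact absurd hOuw (hvsrc u (Finset.mem_of_mem_erase (hTW h1)))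
                · exact hD' u h1 w h2 hOuw
            · rw [hsd2]; exact hA'
          · intro T hT
            exact Finset.insert_erase (hvmem T hT)
          · intro T' hT'
            rw [mem_famT] at hT'
            exact Finset.erase_insert (fun h => (Finset.mem_erase.mp (hT'.1 h)).1 rfl)
          · intro T hT
            have hvT := hvmem T hT
            show (-1 : ℤ) ^ T.card = (-1 : ℤ) ^ ((T.erase v).card + 1)
            rw [Finset.card_erase_of_mem hvT]
            have hpos : 0 < T.card := Finset.card_pos.mpr ⟨v, hvT⟩
            congr 1
            omega
        rw [hbij]
        have : ∀ T' ∈ famT O P W', (-1 : ℤ) ^ (T'.card + 1) = -((-1 : ℤ) ^ T'.card) := by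
          intro T' _
          rw [pow_succ]; ring
        rw [Finset.sum_congr rfl this, Finset.sum_neg_distrib, ih W' hcard' hW'ne, neg_zero]
      · -- v is isolated in W
        push_neg at hD
        have hIso : ∀ u ∈ W, ¬ G.Adj v u := by
          intro u hu hadj
          rcases or_tot hP hadj with h | h
          · exact hA u hu hadj h
          · exact hD u hu hadj h
        have hnoPout : ∀ w ∈ W, ¬ P v w := fun w hw hPvw =>
          hIso w hw (hP.1.1 v w hPvw).2.2
        have hnoPin : ∀ w ∈ W, ¬ P w v := fun w hw hPwv =>
          hIso w hw (hP.1.1 w v hPwv).2.2.symm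
        rw [← Finset.sum_filter_add_sum_filter_not (famT O P W) (fun T => v ∈ T)]
        have hpart1 : ∑ T ∈ (famT O P W).filter (fun T => v ∈ T), (-1 : ℤ) ^ T.card
            = ∑ T' ∈ famT O P W', (-1 : ℤ) ^ (T'.card + 1) := by
          refine Finset.sum_bij' (fun T _ => T.erase v) (fun T' _ => insert v T') ?_ ?_ ?_ ?_ ?_
          · intro T hT
            obtain ⟨hT, hvT⟩ := Finset.mem_filter.mp hT
            rw [mem_famT] at hT
            obtain ⟨hTW, hup, hD', hA'⟩ := hT
            have hsd : W' \ T.erase v = W \ T := by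
              ext x
              simp only [Finset.mem_sdiff, Finset.mem_erase, hW']
              constructor
              · rintro ⟨⟨hxv, hxW⟩, hx⟩
                exact ⟨hxW, fun hxT => hx ⟨hxv, hxT⟩⟩
              · rintro ⟨hxW, hxT⟩
                exact ⟨⟨fun h => hxT (h ▸ hvT), hxW⟩, fun h => hxT h.2⟩
            rw [mem_famT]
            refine ⟨fun x hx => Finset.mem_erase.mpr
                ⟨(Finset.mem_erase.mp hx).1, hTW (Finset.mem_of_mem_erase hx)⟩, ?_, ?_, ?_⟩
            · intro u hu w hw hPuw
              exact Finset.mem_erase.mpr ⟨(Finset.mem_erase.mp hw).1,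
                hup u (Finset.mem_of_mem_erase hu) w (Finset.mem_of_mem_erase hw) hPuw⟩
            · exact fun u hu w hw h =>
                hD' u (Finset.mem_of_mem_erase hu) w (Finset.mem_of_mem_erase hw) h
            · rw [hsd]; exact hA'
          · intro T' hT'
            rw [mem_famT] at hT'
            obtain ⟨hTW, hup, hD', hA'⟩ := hT'
            have hvT' : v ∉ T' := fun h => (Finset.mem_erase.mp (hTW h)).1 rfl
            have hsd2 : W \ insert v T' = W' \ T' := by
              ext x
              simp only [Finset.mem_sdiff, Finset.mem_erase, Finset.mem_insert, hW']
              constructor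
              · rintro ⟨hxW, hx⟩
                exact ⟨⟨fun h => hx (Or.inl h), hxW⟩, fun h => hx (Or.inr h)⟩
              · rintro ⟨⟨hxv, hxW⟩, hx⟩
                exact ⟨hxW, fun h => h.elim hxv hx⟩
            rw [Finset.mem_filter, mem_famT]
            refine ⟨⟨?_, ?_, ?_, ?_⟩, Finset.mem_insert_self v T'⟩
            · intro x hx
              rcases Finset.mem_insert.mp hx with h | h
              · exact h ▸ hvW
              · exact Finset.mem_of_mem_erase (hTW h)
            · intro u hu w hw hPuw
              rcases Finset.mem_insert.mp hu with h | h
              · exact absurd hPuw (h ▸ hnoPout w hw)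
              · by_cases hwv : w = v
                · exact Finset.mem_insert.mpr (Or.inl hwv)
                · exact Finset.mem_insert.mpr
                    (Or.inr (hup u h w (Finset.mem_erase.mpr ⟨hwv, hw⟩) hPuw))
            · intro u hu w hw hOuw
              rcases Finset.mem_insert.mp hu with h1 | h1
              · subst h1
                rcases Finset.mem_insert.mp hw with h2 | h2
                · exact absurd (or_adj hO (h2 ▸ hOuw)) (G.irrefl)
                · exact absurd (or_adj hO hOuw)
                    (hIso w (Finset.mem_of_mem_erase (hTW h2)))
              · rcases Finset.mem_insert.mp hw with h2 | h2
                · subst h2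
                  exact absurd hOuw (hvsrc u (Finset.mem_of_mem_erase (hTW h1)))
                · exact hD' u h1 w h2 hOuw
            · rw [hsd2]; exact hA'
          · intro T hT
            exact Finset.insert_erase (Finset.mem_filter.mp hT).2
          · intro T' hT'
            rw [mem_famT] at hT'
            exact Finset.erase_insert (fun h => (Finset.mem_erase.mp (hT'.1 h)).1 rfl)
          · intro T hT
            have hvT := (Finset.mem_filter.mp hT).2
            show (-1 : ℤ) ^ T.card = (-1 : ℤ) ^ ((T.erase v).card + 1)
            rw [Finset.card_erase_of_mem hvT]
            have hpos : 0 < T.card := Finset.card_pos.mpr ⟨v, hvT⟩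
            congr 1
            omega
        have hpart2 : (famT O P W).filter (fun T => ¬ v ∈ T) = famT O P W' := by
          ext T
          rw [Finset.mem_filter, mem_famT, mem_famT]
          constructor
          · rintro ⟨⟨hTW, hup, hD', hA'⟩, hvT⟩
            refine ⟨fun x hx => Finset.mem_erase.mpr ⟨fun h => hvT (h ▸ hx), hTW hx⟩,
              fun u hu w hw hPuw => hup u hu w (Finset.mem_of_mem_erase hw) hPuw, hD',
              fun u hu w hw hOuw => hA' u ?_ w ?_ hOuw⟩
            · rw [Finset.mem_sdiff] at hu ⊢
              exact ⟨Finset.mem_of_mem_erase hu.1, hu.2⟩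
            · rw [Finset.mem_sdiff] at hw ⊢
              exact ⟨Finset.mem_of_mem_erase hw.1, hw.2⟩
          · rintro ⟨hTW, hup, hD', hA'⟩
            have hvT : v ∉ T := fun h => (Finset.mem_erase.mp (hTW h)).1 rfl
            refine ⟨⟨fun x hx => Finset.mem_of_mem_erase (hTW hx), ?_, hD', ?_⟩, hvT⟩
            · intro u hu w hw hPuw
              by_cases hwv : w = v
              · exact absurd hPuw (hwv ▸ hnoPin u (Finset.mem_of_mem_erase (hTW hu)))
              · exact hup u hu w (Finset.mem_erase.mpr ⟨hwv, hw⟩) hPuw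
            · intro u hu w hw hOuw
              rw [Finset.mem_sdiff] at hu hw
              by_cases huv : u = v
              · exact absurd (or_adj hO hOuw) ((huv ▸ hIso) w hw.1)
              · by_cases hwv : w = v
                · subst hwv
                  exact absurd hOuw (hvsrc u hu.1)
                · exact hA' u (Finset.mem_sdiff.mpr ⟨Finset.mem_erase.mpr ⟨huv, hu.1⟩, hu.2⟩)
                    w (Finset.mem_sdiff.mpr ⟨Finset.mem_erase.mpr ⟨hwv, hw.1⟩, hw.2⟩) hOuw
        rw [hpart1, hpart2]
        have : ∀ T' ∈ famT O P W', (-1 : ℤ) ^ (T'.card + 1) = -((-1 : ℤ) ^ T'.card) := by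
          intro T' _
          rw [pow_succ]; ring
        rw [Finset.sum_congr rfl this, Finset.sum_neg_distrib]
        exact neg_add_cancel _

lemma mem_foldr_union {C : List (Finset V)} {v : V} :
    v ∈ C.foldr (· ∪ ·) ∅ ↔ ∃ B ∈ C, v ∈ B := by
  induction C with
  | nil => simp
  | cons S C ih => simp [ih]

lemma isComposition_cons {X S : Finset V} {C : List (Finset V)} :
    IsComposition X (S :: C) ↔ S.Nonempty ∧ S ⊆ X ∧ IsComposition (X \ S) C := by
  constructor
  · rintro ⟨hne, hpw, hfold⟩
    rw [List.pairwise_cons] at hpw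
    have hfold' : S ∪ C.foldr (· ∪ ·) ∅ = X := hfold
    have hdisj : Disjoint S (C.foldr (· ∪ ·) ∅) := by
      rw [Finset.disjoint_left]
      intro x hxS hxU
      obtain ⟨B, hB, hxB⟩ := mem_foldr_union.mp hxU
      exact Finset.disjoint_left.mp (hpw.1 B hB) hxS hxB
    refine ⟨hne S List.mem_cons_self, hfold' ▸ Finset.subset_union_left,
      fun B hB => hne B (List.mem_cons_of_mem _ hB), hpw.2, ?_⟩
    rw [← hfold', Finset.union_sdiff_cancel_left hdisj]
  · rintro ⟨hSne, hSX, hne, hpw, hfold⟩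
    refine ⟨?_, ?_, ?_⟩
    · intro B hB
      rcases List.mem_cons.mp hB with rfl | hB
      · exact hSne
      · exact hne B hB
    · rw [List.pairwise_cons]
      refine ⟨fun B hB => ?_, hpw⟩
      have hBsub : B ⊆ X \ S := by
        rw [← hfold]
        exact fun x hx => mem_foldr_union.mpr ⟨B, hB, hx⟩
      exact Finset.disjoint_left.mpr fun _ hxS hxB =>
        (Finset.mem_sdiff.mp (hBsub hxB)).2 hxS
    · show S ∪ C.foldr (· ∪ ·) ∅ = X
      rw [hfold, Finset.union_sdiff_of_subset hSX]

variable (G O P) in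
def Good : Finset V → List (Finset V) → Prop
  | W, [] => W = ∅
  | W, S :: C' => S.Nonempty ∧ S ⊆ W ∧ allA O P S ∧ fwdP G P S (W \ S) ∧ Good (W \ S) C'

lemma good_isComposition : ∀ {C : List (Finset V)} {W : Finset V},
    Good G O P W C → IsComposition W C := by
  intro C
  induction C with
  | nil =>
    intro W h
    exact ⟨fun B hB => absurd hB List.not_mem_nil, List.Pairwise.nil, h.symm⟩
  | cons S C ih =>
    intro W h
    exact isComposition_cons.mpr ⟨h.1, h.2.1, ih h.2.2.2.2⟩

lemma earlier_cons {S : Finset V} {C : List (Finset V)} {u v : V} :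
    earlier (S :: C) u v ↔ (u ∈ S ∧ ∃ B ∈ C, v ∈ B) ∨ earlier C u v := by
  constructor
  · rintro ⟨⟨iv, hi⟩, ⟨jv, hj⟩, hij, hu, hv⟩
    rw [Fin.mk_lt_mk] at hij
    cases iv with
    | zero =>
      cases jv with
      | zero => exact absurd hij (lt_irrefl _)
      | succ jv =>
        exact Or.inl ⟨hu, C.get ⟨jv, Nat.lt_of_succ_lt_succ hj⟩, List.get_mem _ _, hv⟩
    | succ iv =>
      cases jv with
      | zero => exact absurd hij (Nat.not_lt_zero _)
      | succ jv =>
        exact Or.inr ⟨⟨iv, Nat.lt_of_succ_lt_succ hi⟩, ⟨jv, Nat.lt_of_succ_lt_succ hj⟩,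
          Fin.mk_lt_mk.mpr (Nat.lt_of_succ_lt_succ hij), hu, hv⟩
  · rintro (⟨huS, B, hB, hvB⟩ | ⟨⟨iv, hi⟩, ⟨jv, hj⟩, hij, hu, hv⟩)
    · obtain ⟨⟨kv, hk⟩, hkeq⟩ := List.mem_iff_get.mp hB
      refine ⟨⟨0, Nat.succ_pos _⟩, ⟨kv + 1, Nat.succ_lt_succ hk⟩,
        Fin.mk_lt_mk.mpr (Nat.succ_pos _), huS, ?_⟩
      show v ∈ C.get ⟨kv, hk⟩
      rw [hkeq]
      exact hvB
    · rw [Fin.mk_lt_mk] at hij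
      exact ⟨⟨iv + 1, Nat.succ_lt_succ hi⟩, ⟨jv + 1, Nat.succ_lt_succ hj⟩,
        Fin.mk_lt_mk.mpr (Nat.succ_lt_succ hij), hu, hv⟩

lemma sameBlock_cons {S : Finset V} {C : List (Finset V)} {u v : V} :
    sameBlock (S :: C) u v ↔ (u ∈ S ∧ v ∈ S) ∨ sameBlock C u v := by
  constructor
  · rintro ⟨⟨iv, hi⟩, hu, hv⟩
    cases iv with
    | zero => exact Or.inl ⟨hu, hv⟩
    | succ iv => exact Or.inr ⟨⟨iv, Nat.lt_of_succ_lt_succ hi⟩, hu, hv⟩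
  · rintro (⟨hu, hv⟩ | ⟨⟨iv, hi⟩, hu, hv⟩)
    · exact ⟨⟨0, Nat.succ_pos _⟩, hu, hv⟩
    · exact ⟨⟨iv + 1, Nat.succ_lt_succ hi⟩, hu, hv⟩

lemma good_earlier : ∀ {C : List (Finset V)} {W : Finset V}, Good G O P W C →
    ∀ {u v : V}, G.Adj u v → earlier C u v → P u v := by
  intro C
  induction C with
  | nil =>
    rintro W _ u v _ ⟨i, _, _, _, _⟩
    exact i.elim0
  | cons S C ih =>
    rintro W hg u v hadj he
    rcases earlier_cons.mp he with ⟨huS, B, hB, hvB⟩ | he'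
    · have hcomp : IsComposition (W \ S) C := good_isComposition hg.2.2.2.2
      have hvW : v ∈ W \ S := by
        rw [← hcomp.2.2]
        exact mem_foldr_union.mpr ⟨B, hB, hvB⟩
      exact hg.2.2.2.1 u huS v hvW hadj
    · exact ih hg.2.2.2.2 hadj he'

lemma good_same : ∀ {C : List (Finset V)} {W : Finset V}, Good G O P W C →
    ∀ {u v : V}, O u v → sameBlock C u v → P u v := by
  intro C
  induction C with
  | nil =>
    rintro W _ u v _ ⟨i, _, _⟩
    exact i.elim0
  | cons S C ih =>
    rintro W hg u v hOuv hsb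
    rcases sameBlock_cons.mp hsb with ⟨huS, hvS⟩ | hsb'
    · exact hg.2.2.1 u huS v hvS hOuv
    · exact ih hg.2.2.2.2 hOuv hsb'

lemma good_of_conditions : ∀ {C : List (Finset V)} {W : Finset V}, IsComposition W C →
    (∀ u v, O u v → sameBlock C u v → P u v) →
    (∀ u v, G.Adj u v → earlier C u v → P u v) → Good G O P W C := by
  intro C
  induction C with
  | nil =>
    intro W h _ _
    exact h.2.2.symm
  | cons S C ih =>
    intro W h hsb he
    obtain ⟨hSne, hSW, hcomp'⟩ := isComposition_cons.mp h
    refine ⟨hSne, hSW, ?_, ?_, ih hcomp' ?_ ?_⟩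
    · intro x hx y hy hOxy
      exact hsb x y hOxy (sameBlock_cons.mpr (Or.inl ⟨hx, hy⟩))
    · intro x hx y hy hadj
      have hyB : ∃ B ∈ C, y ∈ B := by
        apply mem_foldr_union.mp
        rw [hcomp'.2.2]
        exact hy
      exact he x y hadj (earlier_cons.mpr (Or.inl ⟨hx, hyB⟩))
    · exact fun x y hO hsb' => hsb x y hO (sameBlock_cons.mpr (Or.inr hsb'))
    · exact fun x y hadj he' => he x y hadj (earlier_cons.mpr (Or.inr he'))

lemma comp_block_exists {C : List (Finset V)} (hcomp : IsComposition Finset.univ C) (u : V) :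
    ∃ i : Fin C.length, u ∈ C.get i := by
  have hu : u ∈ C.foldr (· ∪ ·) ∅ := by
    rw [hcomp.2.2]
    exact Finset.mem_univ u
  obtain ⟨B, hB, huB⟩ := mem_foldr_union.mp hu
  obtain ⟨i, hi⟩ := List.mem_iff_get.mp hB
  exact ⟨i, hi.symm ▸ huB⟩

lemma good_orC (hO : IsAcyclicOrientationOn G Set.univ O)
    (hP : IsAcyclicOrientationOn G Set.univ P) {C : List (Finset V)}
    (hg : Good G O P Finset.univ C) : orC G C O = P := by
  have hcomp := good_isComposition hg
  funext u v
  apply propext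
  constructor
  · rintro (⟨hadj, he⟩ | ⟨hOuv, hsb⟩)
    · exact good_earlier hg hadj he
    · exact good_same hg hOuv hsb
  · intro hPuv
    have hadj : G.Adj u v := (hP.1.1 u v hPuv).2.2
    obtain ⟨i, hui⟩ := comp_block_exists hcomp u
    obtain ⟨j, hvj⟩ := comp_block_exists hcomp v
    rcases lt_trichotomy i j with hij | hij | hij
    · exact Or.inl ⟨hadj, i, j, hij, hui, hvj⟩
    · subst hij
      rcases or_tot hO hadj with hOuv | hOvu
      · exact Or.inr ⟨hOuv, i, hui, hvj⟩
      · exact absurd (good_same hg hOvu ⟨i, hvj, hui⟩) fun h => or_nb hP h hPuv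
    · exact absurd (good_earlier hg hadj.symm ⟨j, i, hij, hvj, hui⟩) fun h => or_nb hP h hPuv

lemma good_of_orC {C : List (Finset V)} (hcomp : IsComposition Finset.univ C)
    (horC : orC G C O = P) : Good G O P Finset.univ C := by
  have h1 : ∀ u v, orC G C O u v ↔ P u v := fun u v =>
    iff_of_eq (congrFun (congrFun horC u) v)
  refine good_of_conditions hcomp ?_ ?_
  · exact fun u v hO hsb => (h1 u v).mp (Or.inr ⟨hO, hsb⟩)
  · exact fun u v hadj he => (h1 u v).mp (Or.inl ⟨hadj, he⟩)

lemma good_length : ∀ {C : List (Finset V)} {W : Finset V}, Good G O P W C →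
    C.length ≤ W.card := by
  intro C
  induction C with
  | nil => intro W _; simp
  | cons S C ih =>
    intro W h
    have h1 := ih h.2.2.2.2
    have h2 : (W \ S).card = W.card - S.card := Finset.card_sdiff_of_subset h.2.1
    have h3 : 0 < S.card := Finset.card_pos.mpr h.1
    have h4 : S.card ≤ W.card := Finset.card_le_card h.2.1
    simp only [List.length_cons]
    omega

variable (G O P) in
lemma good_finite (W : Finset V) : {C : List (Finset V) | Good G O P W C}.Finite :=
  (List.finite_length_le (Finset V) W.card).subset fun _ hC => good_length hC

variable (G O P) in
noncomputable def goodFinset (W : Finset V) : Finset (List (Finset V)) :=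
  (good_finite G O P W).toFinset

lemma mem_goodFinset {W : Finset V} {C : List (Finset V)} :
    C ∈ goodFinset G O P W ↔ Good G O P W C :=
  Set.Finite.mem_toFinset _

variable (G O P) in
noncomputable def candF (W : Finset V) : Finset (Finset V) :=
  W.powerset.filter fun S => S.Nonempty ∧ allA O P S ∧ fwdP G P S (W \ S)

lemma goodFinset_empty : goodFinset G O P ∅ = {[]} := by
  ext C
  rw [mem_goodFinset, Finset.mem_singleton]
  constructor
  · intro h
    match C, h with
    | [], _ => rfl
    | S :: C', h => exact absurd (h.2.1 h.1.choose_spec) (Finset.notMem_empty _)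
  · rintro rfl
    show (∅ : Finset V) = ∅
    rfl

lemma REC {W : Finset V} (hne : W.Nonempty) :
    ∑ C ∈ goodFinset G O P W, (-1 : ℤ) ^ C.length
      = ∑ S ∈ candF G O P W, ∑ C' ∈ goodFinset G O P (W \ S), -((-1 : ℤ) ^ C'.length) := by
  rw [← Finset.sum_sigma (candF G O P W) (fun S => goodFinset G O P (W \ S))
    (fun p => -((-1 : ℤ) ^ p.2.length))]
  refine Finset.sum_bij'
    (fun (C : List (Finset V)) _ => (⟨C.headI, C.tail⟩ : (_ : Finset V) × List (Finset V)))
    (fun p _ => p.1 :: p.2) ?_ ?_ ?_ ?_ ?_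
  · intro C hC
    rw [mem_goodFinset] at hC
    match C, hC with
    | [], hC => exact absurd hC hne.ne_empty
    | S :: C', hC =>
      obtain ⟨h1, h2, h3, h4, h5⟩ := hC
      rw [Finset.mem_sigma]
      refine ⟨?_, ?_⟩
      · show S ∈ candF G O P W
        rw [candF, Finset.mem_filter, Finset.mem_powerset]
        exact ⟨h2, h1, h3, h4⟩
      · show C' ∈ goodFinset G O P (W \ S)
        rw [mem_goodFinset]
        exact h5
  · rintro ⟨S, C'⟩ hp
    rw [Finset.mem_sigma] at hp
    have h1 := hp.1
    rw [candF, Finset.mem_filter, Finset.mem_powerset] at h1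
    rw [mem_goodFinset]
    exact ⟨h1.2.1, h1.1, h1.2.2.1, h1.2.2.2, mem_goodFinset.mp hp.2⟩
  · intro C hC
    rw [mem_goodFinset] at hC
    match C, hC with
    | [], hC => exact absurd hC hne.ne_empty
    | S :: C', _ => rfl
  · rintro ⟨S, C'⟩ _
    rfl
  · intro C hC
    rw [mem_goodFinset] at hC
    match C, hC with
    | [], hC => exact absurd hC hne.ne_empty
    | S :: C', _ =>
      show (-1 : ℤ) ^ (S :: C').length = -((-1 : ℤ) ^ C'.length)
      rw [List.length_cons, pow_succ]
      ring

lemma mem_famT_self {W : Finset V} : W ∈ famT O P W ↔ allD O P W := by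
  rw [mem_famT]
  constructor
  · exact fun h => h.2.2.1
  · intro h
    refine ⟨Finset.Subset.refl W, fun u _ w hw _ => hw, h, ?_⟩
    rw [Finset.sdiff_self]
    exact fun u hu => absurd hu (Finset.notMem_empty u)

lemma Fval (hO : IsAcyclicOrientationOn G Set.univ O)
    (hP : IsAcyclicOrientationOn G Set.univ P) :
    ∀ (n : ℕ) (W : Finset V), W.card ≤ n →
      ∑ C ∈ goodFinset G O P W, (-1 : ℤ) ^ C.length
        = if allD O P W then (-1 : ℤ) ^ W.card else 0 := by
  intro n
  induction n with
  | zero =>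
    intro W hcard
    have hW : W = ∅ := Finset.card_eq_zero.mp (Nat.le_zero.mp hcard)
    subst hW
    rw [goodFinset_empty]
    have hD : allD O P ∅ := fun u hu => absurd hu (Finset.notMem_empty u)
    simp [hD]
  | succ n ih =>
    intro W hcard
    rcases W.eq_empty_or_nonempty with rfl | hne
    · rw [goodFinset_empty]
      have hD : allD O P ∅ := fun u hu => absurd hu (Finset.notMem_empty u)
      simp [hD]
    · rw [REC hne]
      have hstep : ∀ S ∈ candF G O P W,
          ∑ C' ∈ goodFinset G O P (W \ S), -((-1 : ℤ) ^ C'.length)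
            = -(if allD O P (W \ S) then (-1 : ℤ) ^ (W \ S).card else 0) := by
        intro S hS
        rw [Finset.sum_neg_distrib]
        congr 1
        apply ih
        rw [candF, Finset.mem_filter, Finset.mem_powerset] at hS
        have h2 : (W \ S).card = W.card - S.card := Finset.card_sdiff_of_subset hS.1
        have h3 : 0 < S.card := Finset.card_pos.mpr hS.2.1
        have h4 : S.card ≤ W.card := Finset.card_le_card hS.1
        omega
      rw [Finset.sum_congr rfl hstep, Finset.sum_neg_distrib, ← Finset.sum_filter]
      have hbij : ∑ S ∈ (candF G O P W).filter (fun S => allD O P (W \ S)),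
            (-1 : ℤ) ^ (W \ S).card
          = ∑ T ∈ (famT O P W).erase W, (-1 : ℤ) ^ T.card := by
        refine Finset.sum_bij' (fun S _ => W \ S) (fun T _ => W \ T) ?_ ?_ ?_ ?_ ?_
        · intro S hS
          rw [Finset.mem_filter] at hS
          obtain ⟨hS, hDs⟩ := hS
          rw [candF, Finset.mem_filter, Finset.mem_powerset] at hS
          obtain ⟨hSW, hSne, hSA, hSF⟩ := hS
          rw [Finset.mem_erase, mem_famT]
          refine ⟨?_, Finset.sdiff_subset, ?_, hDs, ?_⟩
          · show W \ S ≠ W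
            intro h
            obtain ⟨x, hx⟩ := hSne
            have hx2 : x ∈ W \ S := by rw [h]; exact hSW hx
            exact (Finset.mem_sdiff.mp hx2).2 hx
          · intro u hu w hw hPuw
            by_cases hwS : w ∈ S
            · have hadj : G.Adj w u := (hP.1.1 u w hPuw).2.2.symm
              exact absurd (hSF w hwS u hu hadj) fun h => or_nb hP h hPuw
            · exact Finset.mem_sdiff.mpr ⟨hw, hwS⟩
          · rw [Finset.sdiff_sdiff_eq_self hSW]
            exact hSA
        · intro T hT
          rw [Finset.mem_erase, mem_famT] at hT
          obtain ⟨hTne, hTW, hup, hTD, hTA⟩ := hT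
          rw [Finset.mem_filter, candF, Finset.mem_filter, Finset.mem_powerset]
          refine ⟨⟨Finset.sdiff_subset,
            Finset.sdiff_nonempty.mpr fun h => hTne (Finset.Subset.antisymm hTW h), hTA, ?_⟩, ?_⟩
          · rw [Finset.sdiff_sdiff_eq_self hTW]
            intro u hu w hw hadj
            rcases or_tot hP hadj with h | h
            · exact h
            · exact absurd (hup w hw u (Finset.mem_sdiff.mp hu).1 h) (Finset.mem_sdiff.mp hu).2
          · rw [Finset.sdiff_sdiff_eq_self hTW]
            exact hTD
        · intro S hS
          rw [Finset.mem_filter] at hS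
          have hS1 := hS.1
          rw [candF, Finset.mem_filter, Finset.mem_powerset] at hS1
          exact Finset.sdiff_sdiff_eq_self hS1.1
        · intro T hT
          rw [Finset.mem_erase, mem_famT] at hT
          exact Finset.sdiff_sdiff_eq_self hT.2.1
        · intro S _
          rfl
      rw [hbij]
      by_cases hWmem : W ∈ famT O P W
      · have hKL := KL hO hP W.card W le_rfl hne
        have hsplit := Finset.sum_erase_add (famT O P W) (fun T => (-1 : ℤ) ^ T.card) hWmem
        rw [hKL] at hsplit
        have hDW : allD O P W := mem_famT_self.mp hWmem
        rw [if_pos hDW]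
        have : ∑ T ∈ (famT O P W).erase W, (-1 : ℤ) ^ T.card = -((-1 : ℤ) ^ W.card) := by
          linarith [hsplit]
        rw [this]
        ring
      · have hKL := KL hO hP W.card W le_rfl hne
        have hDW : ¬ allD O P W := fun h => hWmem (mem_famT_self.mpr h)
        rw [if_neg hDW, Finset.erase_eq_of_notMem hWmem, hKL, neg_zero]

lemma rC_const (hO : IsAcyclicOrientationOn G Set.univ O)
    (hP : IsAcyclicOrientationOn G Set.univ P) {C : List (Finset V)}
    (hcomp : IsComposition Finset.univ C) (horC : orC G C O = P) :
    rC C O = {p : V × V | O p.1 p.2 ∧ P p.2 p.1}.ncard := by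
  have h1 : ∀ u v, orC G C O u v ↔ P u v := fun u v =>
    iff_of_eq (congrFun (congrFun horC u) v)
  unfold rC
  congr 1
  ext ⟨u, v⟩
  simp only [Set.mem_setOf_eq]
  constructor
  · rintro ⟨hOuv, he⟩
    exact ⟨hOuv, (h1 v u).mp (Or.inl ⟨(or_adj hO hOuv).symm, he⟩)⟩
  · rintro ⟨hOuv, hPvu⟩
    refine ⟨hOuv, ?_⟩
    have hadj := or_adj hO hOuv
    obtain ⟨i, hui⟩ := comp_block_exists hcomp u
    obtain ⟨j, hvj⟩ := comp_block_exists hcomp v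
    rcases lt_trichotomy i j with hij | hij | hij
    · exact absurd ((h1 u v).mp (Or.inl ⟨hadj, i, j, hij, hui, hvj⟩)) fun h => or_nb hP h hPvu
    · subst hij
      exact absurd ((h1 u v).mp (Or.inr ⟨hOuv, i, hui, hvj⟩)) fun h => or_nb hP h hPvu
    · exact ⟨j, i, hij, hvj, hui⟩

lemma ncard_O_pairs (hO : IsAcyclicOrientationOn G Set.univ O) :
    {p : V × V | O p.1 p.2}.ncard = G.edgeSet.ncard := by
  have himg : (fun p : V × V => s(p.1, p.2)) '' {p : V × V | O p.1 p.2} = G.edgeSet := by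
    ext e
    induction e with
    | _ x y =>
      simp only [Set.mem_image, Set.mem_setOf_eq, SimpleGraph.mem_edgeSet]
      constructor
      · rintro ⟨⟨a, b⟩, hab, he⟩
        rcases Sym2.eq_iff.mp he with ⟨rfl, rfl⟩ | ⟨rfl, rfl⟩
        · exact or_adj hO hab
        · exact (or_adj hO hab).symm
      · intro hadj
        rcases or_tot hO hadj with h | h
        · exact ⟨(x, y), h, rfl⟩
        · exact ⟨(y, x), h, Sym2.eq_swap⟩
  rw [← himg, Set.ncard_image_of_injOn]
  rintro ⟨a, b⟩ ha ⟨c, d⟩ hc he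
  simp only [Set.mem_setOf_eq] at ha hc
  rcases Sym2.eq_iff.mp he with ⟨rfl, rfl⟩ | ⟨rfl, rfl⟩
  · rfl
  · exact (or_nb hO ha hc).elim

lemma allD_univ_iff (hO : IsAcyclicOrientationOn G Set.univ O)
    (hP : IsAcyclicOrientationOn G Set.univ P) :
    allD O P Finset.univ ↔ P = flipO O := by
  constructor
  · intro h
    funext u v
    apply propext
    constructor
    · intro hPuv
      have hadj := (hP.1.1 u v hPuv).2.2
      rcases or_tot hO hadj with h1 | h1
      · exact absurd (h u (Finset.mem_univ u) v (Finset.mem_univ v) h1)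
          fun h2 => or_nb hP h2 hPuv
      · exact h1
    · intro hOvu
      exact h v (Finset.mem_univ v) u (Finset.mem_univ u) hOvu
  · rintro rfl
    exact fun u _ v _ hOuv => hOuv

end AuxProof

theorem antipode_acyclic_orientations {V : Type*} [Fintype V] [DecidableEq V] [Nonempty V]
    (G : SimpleGraph V) (O P : V → V → Prop)
    (hO : IsAcyclicOrientationOn G Set.univ O)
    (hP : IsAcyclicOrientationOn G Set.univ P) :
    (P = flipO O →
      ∑ᶠ C ∈ {C : List (Finset V) | IsComposition Finset.univ C ∧ orC G C O = P},
          ((-1 : Polynomial ℤ)) ^ C.length * Polynomial.X ^ rC C O =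
        (-1 : Polynomial ℤ) ^ Fintype.card V * Polynomial.X ^ G.edgeSet.ncard) ∧
    (P ≠ flipO O →
      ∑ᶠ C ∈ {C : List (Finset V) | IsComposition Finset.univ C ∧ orC G C O = P},
          ((-1 : Polynomial ℤ)) ^ C.length * Polynomial.X ^ rC C O = 0) := by
  classical
  have hgood : {C : List (Finset V) | IsComposition Finset.univ C ∧ orC G C O = P}
      = ↑(goodFinset G O P Finset.univ) := by
    ext C
    simp only [Set.mem_setOf_eq, Finset.mem_coe, mem_goodFinset]
    exact ⟨fun h => good_of_orC h.1 h.2, fun h => ⟨good_isComposition h, good_orC hO hP h⟩⟩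
  have key : ∑ᶠ C ∈ {C : List (Finset V) | IsComposition Finset.univ C ∧ orC G C O = P},
      ((-1 : Polynomial ℤ)) ^ C.length * Polynomial.X ^ rC C O
      = (if allD O P Finset.univ then (-1 : Polynomial ℤ) ^ Fintype.card V else 0)
        * Polynomial.X ^ {p : V × V | O p.1 p.2 ∧ P p.2 p.1}.ncard := by
    rw [hgood, finsum_mem_coe_finset]
    have hrc : ∀ C ∈ goodFinset G O P Finset.univ,
        ((-1 : Polynomial ℤ)) ^ C.length * Polynomial.X ^ rC C O
          = ((-1 : Polynomial ℤ)) ^ C.length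
              * Polynomial.X ^ {p : V × V | O p.1 p.2 ∧ P p.2 p.1}.ncard := by
      intro C hC
      rw [mem_goodFinset] at hC
      rw [rC_const hO hP (good_isComposition hC) (good_orC hO hP hC)]
    rw [Finset.sum_congr rfl hrc, ← Finset.sum_mul]
    congr 1
    have hz := Fval hO hP Finset.univ.card Finset.univ le_rfl
    have hcast : ∑ C ∈ goodFinset G O P Finset.univ, ((-1 : Polynomial ℤ)) ^ C.length
        = ((∑ C ∈ goodFinset G O P Finset.univ, (-1 : ℤ) ^ C.length : ℤ) : Polynomial ℤ) := by
      push_cast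
      rfl
    rw [hcast, hz, Finset.card_univ]
    by_cases hD : allD O P Finset.univ
    · rw [if_pos hD, if_pos hD]
      push_cast
      ring
    · rw [if_neg hD, if_neg hD]
      simp
  constructor
  · intro hPf
    have hset2 : {p : V × V | O p.1 p.2 ∧ P p.2 p.1} = {p : V × V | O p.1 p.2} := by
      subst hPf
      ext ⟨u, v⟩
      simp only [Set.mem_setOf_eq, flipO, and_self]
    rw [key, if_pos ((allD_univ_iff hO hP).mpr hPf), hset2, ncard_O_pairs hO]
  · intro hPf
    rw [key, if_neg fun h => hPf ((allD_univ_iff hO hP).mp h), zero_mul]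


end GraphSpecies
end

section
/- For every nonempty finite set X, the sum over all ordered set partitions (S_1,…,S_k) of X into nonempty blocks of (-1)^k equals (-1)^{|X|}. -/
namespace GraphSpecies

variable {V : Type*}

variable [DecidableEq V]

lemma subset_foldr {C : List (Finset V)} {B : Finset V} (h : B ∈ C) :
    B ⊆ C.foldr (· ∪ ·) ∅ := by
  induction C with
  | nil => simp at h
  | cons A C ih =>
    rcases List.mem_cons.1 h with rfl | h
    · exact Finset.subset_union_left
    · exact (ih h).trans Finset.subset_union_right

lemma disjoint_foldr {C : List (Finset V)} {B : Finset V}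
    (h : ∀ B' ∈ C, Disjoint B B') : Disjoint B (C.foldr (· ∪ ·) ∅) := by
  induction C with
  | nil => simp
  | cons A C ih =>
    simp only [List.foldr_cons, Finset.disjoint_union_right]
    exact ⟨h A (by simp), ih fun B' hB' => h B' (List.mem_cons_of_mem _ hB')⟩

lemma length_le_card {C : List (Finset V)} (hd : C.Pairwise Disjoint)
    (hne : ∀ B ∈ C, B.Nonempty) : C.length ≤ (C.foldr (· ∪ ·) ∅).card := by
  induction C with
  | nil => simp
  | cons A C ih =>
    rw [List.pairwise_cons] at hd
    have hdisj : Disjoint A (C.foldr (· ∪ ·) ∅) := disjoint_foldr hd.1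
    simp only [List.foldr_cons, List.length_cons]
    rw [Finset.card_union_of_disjoint hdisj]
    have h1 : 1 ≤ A.card := Finset.card_pos.2 (hne A (by simp))
    have h2 := ih hd.2 fun B hB => hne B (List.mem_cons_of_mem _ hB)
    omega

lemma comp_finite (X : Finset V) : {C : List (Finset V) | IsComposition X C}.Finite := by
  have h1 : {l : List {B : Finset V // B ∈ X.powerset} | l.length ≤ X.card}.Finite :=
    List.finite_length_le _ _
  apply Set.Finite.subset ((h1.image (List.map Subtype.val)))
  intro C hC
  obtain ⟨hne, hd, hU⟩ := hC
  have hsub : ∀ B ∈ C, B ∈ X.powerset := fun B hB =>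
    Finset.mem_powerset.2 (hU ▸ subset_foldr hB)
  refine ⟨C.pmap (fun B h => ⟨B, h⟩) hsub, ?_, ?_⟩
  · simpa using hU ▸ length_le_card hd hne
  · simp [List.map_pmap]

lemma comp_cons_iff {X B : Finset V} {C : List (Finset V)} :
    IsComposition X (B :: C) ↔ B.Nonempty ∧ B ⊆ X ∧ IsComposition (X \ B) C := by
  constructor
  · rintro ⟨hne, hd, hU⟩
    rw [List.pairwise_cons] at hd
    simp only [List.foldr_cons] at hU
    have hdisj : Disjoint B (C.foldr (· ∪ ·) ∅) := disjoint_foldr hd.1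
    have hBX : B ⊆ X := hU ▸ Finset.subset_union_left
    refine ⟨hne B (by simp), hBX, fun B' hB' => hne B' (List.mem_cons_of_mem _ hB'), hd.2, ?_⟩
    rw [← hU, Finset.union_sdiff_cancel_left hdisj]
  · rintro ⟨hBne, hBX, hne, hd, hU⟩
    refine ⟨?_, ?_, ?_⟩
    · intro B' hB'
      rcases List.mem_cons.1 hB' with rfl | h
      · exact hBne
      · exact hne B' h
    · rw [List.pairwise_cons]
      refine ⟨fun B' hB' => ?_, hd⟩
      have : B' ⊆ X \ B := hU ▸ subset_foldr hB'
      exact (Disjoint.mono_left this Finset.sdiff_disjoint).symm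
    · simp only [List.foldr_cons, hU]
      exact Finset.union_sdiff_of_subset hBX

noncomputable def compFinset (X : Finset V) : Finset (List (Finset V)) :=
  (comp_finite X).toFinset

lemma mem_compFinset {X : Finset V} {C : List (Finset V)} :
    C ∈ compFinset X ↔ IsComposition X C := by
  simp [compFinset, Set.Finite.mem_toFinset]

lemma compFinset_empty : compFinset (∅ : Finset V) = {[]} := by
  ext C
  rw [mem_compFinset, Finset.mem_singleton]
  constructor
  · rintro ⟨hne, -, hU⟩
    cases C with
    | nil => rfl
    | cons B C =>
      have : B ⊆ (∅ : Finset V) := hU ▸ subset_foldr (by simp)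
      have := hne B (by simp)
      simp_all [Finset.subset_empty]
  · rintro rfl; exact ⟨by simp, by simp, rfl⟩

lemma compFinset_eq (X : Finset V) (hX : X.Nonempty) :
    compFinset X = (X.powerset.erase ∅).biUnion
      (fun B => (compFinset (X \ B)).image (B :: ·)) := by
  ext C
  simp only [Finset.mem_biUnion, Finset.mem_erase, Finset.mem_powerset, Finset.mem_image,
    mem_compFinset]
  constructor
  · intro hC
    cases C with
    | nil =>
      exfalso
      obtain ⟨-, -, hU⟩ := hC
      simp only [List.foldr_nil] at hU
      exact hX.ne_empty hU.symm
    | cons B C =>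
      obtain ⟨hBne, hBX, hC'⟩ := comp_cons_iff.1 hC
      exact ⟨B, ⟨hBne.ne_empty, hBX⟩, C, hC', rfl⟩
  · rintro ⟨B, ⟨hBne, hBX⟩, C', hC', rfl⟩
    exact comp_cons_iff.2 ⟨Finset.nonempty_iff_ne_empty.2 hBne, hBX, hC'⟩

lemma neg_one_pow_sub {n k : ℕ} (h : k ≤ n) : (-1 : ℤ) ^ (n - k) = (-1) ^ n * (-1) ^ k := by
  conv_rhs => rw [← Nat.sub_add_cancel h]
  rw [pow_add, mul_assoc, ← pow_add, ← two_mul, pow_mul]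
  norm_num

lemma key (X : Finset V) : ∑ C ∈ compFinset X, (-1 : ℤ) ^ C.length = (-1 : ℤ) ^ X.card := by
  induction X using Finset.strongInduction with
  | _ X ih =>
    rcases eq_or_ne X ∅ with rfl | hXne
    · simp [compFinset_empty]
    · have hX : X.Nonempty := Finset.nonempty_iff_ne_empty.2 hXne
      rw [compFinset_eq X hX, Finset.sum_biUnion ?disj]
      case disj =>
        intro B1 h1 B2 h2 hne12
        simp only [Finset.disjoint_left, Finset.mem_image]
        rintro C ⟨C1, -, rfl⟩ ⟨C2, -, h⟩
        injection h with hB hC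
        exact hne12 hB.symm
      have step1 : ∀ B ∈ X.powerset.erase ∅,
          ∑ C ∈ (compFinset (X \ B)).image (B :: ·), (-1 : ℤ) ^ C.length =
            -((-1 : ℤ) ^ X.card * (-1) ^ B.card) := by
        intro B hB
        obtain ⟨hBne, hBX⟩ := Finset.mem_erase.1 hB
        rw [Finset.mem_powerset] at hBX
        have hinj : ∀ a ∈ compFinset (X \ B), ∀ b ∈ compFinset (X \ B),
            B :: a = B :: b → a = b := by
          intro a _ b _ h; injection h
        rw [Finset.sum_image hinj]
        have hss : X \ B ⊂ X :=
          Finset.sdiff_ssubset hBX (Finset.nonempty_iff_ne_empty.2 hBne)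
        simp only [List.length_cons, pow_succ]
        rw [← Finset.sum_mul, ih _ hss, Finset.card_sdiff_of_subset hBX,
          neg_one_pow_sub (Finset.card_le_card hBX)]
        ring
      rw [Finset.sum_congr rfl step1]
      have h0 : (∅ : Finset V) ∈ X.powerset := Finset.empty_mem_powerset X
      have hadd := Finset.add_sum_erase _ (fun B : Finset V => (-1 : ℤ) ^ B.card) h0
      rw [Finset.sum_powerset_neg_one_pow_card_of_nonempty hX] at hadd
      simp only [Finset.card_empty, pow_zero] at hadd
      have h2 : ∑ B ∈ X.powerset.erase ∅, (-1 : ℤ) ^ B.card = -1 := by linarith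
      simp only [← neg_mul, neg_mul_comm]
      rw [← Finset.mul_sum, Finset.sum_neg_distrib, h2]
      ring


theorem sum_of_signs_over_compositions {V : Type*} [DecidableEq V]
    (X : Finset V) (hX : X.Nonempty) :
    ∑ᶠ C ∈ {C : List (Finset V) | IsComposition X C}, ((-1 : ℤ)) ^ C.length =
      (-1 : ℤ) ^ X.card := by
  have hset : {C : List (Finset V) | IsComposition X C} = ↑(compFinset X) := by
    ext C; simp [mem_compFinset]
  rw [hset, finsum_mem_coe_finset, key]

end GraphSpecies
end

section
/- Let G be a simple graph on a nonempty finite vertex set V and let ℓ be a linear order on V. For an ordered set partition C = (S_1,…,S_k) of V into nonempty blocks, let ℓ(C) denote the linear order ℓ|_{S_1}·ℓ|_{S_2}·⋯·ℓ|_{S_k} on V (the concatenation of the restrictions of ℓ to the blocks, in order: all of S_1 before all of S_2, etc., with each block ordered by ℓ); let A(C) be the number of unordered pairs {u,v} with u ∈ S_i, v ∈ S_j, i < j, uv an edge of G, and u >_ℓ v; and let B(C) be the number of unordered pairs {u,v} with u ∈ S_i, v ∈ S_j, i < j, u ≠ v, uv not an edge of G, and u >_ℓ v. Then, as an identity in ℤ[q,t],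 for every linear order m on V, the sum over all ordered set partitions C of V into nonempty blocks with ℓ(C) = m of (-1)^k q^{A(C)} t^{B(C)} equals (-1)^{|V|} q^{e(G)} t^{e(Ḡ)} if m is the reverse (dual) order of ℓ, and equals 0 otherwise. Here e(G) is the number of edges of G and e(Ḡ) the number of edges of the complement graph Ḡ. -/
namespace GraphSpecies

variable {V : Type*}

section AuxAntipode

variable [DecidableEq V]

def ascL (ℓ : List V) (u v : V) : Prop := ℓ.idxOf u < ℓ.idxOf v

instance (ℓ : List V) : IsTrans V (ascL ℓ) := ⟨fun _ _ _ h1 h2 => lt_trans h1 h2⟩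
instance (ℓ : List V) : IsAntisymm V (ascL ℓ) :=
  ⟨fun _ _ h1 h2 => absurd (lt_trans h1 h2) (lt_irrefl _)⟩

def glue (x : V) : List (List V) → List (List V)
  | [] => [[x]]
  | a :: P => (x :: a) :: P

def condB (ℓ : List V) (x : V) (P : List (List V)) : Bool :=
  match P with
  | (y :: _) :: _ => decide (ℓ.idxOf x < ℓ.idxOf y)
  | _ => false

def splits (ℓ : List V) : List V → Finset (List (List V))
  | [] => {[]}
  | x :: t => ((splits ℓ t).image (fun P => [x] :: P)) ∪
      (((splits ℓ t).filter (fun P => condB ℓ x P = true)).image (glue x))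

theorem splits_nil (ℓ : List V) : splits ℓ [] = {([] : List (List V))} := by
  rw [splits]

theorem splits_eq (ℓ : List V) (x : V) (t : List V) : splits ℓ (x :: t) =
    ((splits ℓ t).image (fun P => [x] :: P)) ∪
      (((splits ℓ t).filter (fun P => condB ℓ x P = true)).image (glue x)) := by
  rw [splits]

def IsSplit (ℓ m : List V) (P : List (List V)) : Prop :=
  P.flatten = m ∧ ∀ a ∈ P, a ≠ [] ∧ a.IsChain (ascL ℓ)

theorem mem_splits {ℓ : List V} : ∀ {m : List V} {P : List (List V)},
    P ∈ splits ℓ m ↔ IsSplit ℓ m P := by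
  intro m
  induction m with
  | nil =>
    intro P
    simp only [splits, Finset.mem_singleton, IsSplit]
    constructor
    · rintro rfl; simp
    · rintro ⟨h1, h2⟩
      cases P with
      | nil => rfl
      | cons a P' =>
        exfalso
        have ha : a ≠ [] := (h2 a (List.mem_cons_self)).1
        have : a ++ P'.flatten = [] := h1
        simp [ha] at this
  | cons x t ih =>
    intro P
    simp only [splits, Finset.mem_union, Finset.mem_image, Finset.mem_filter]
    constructor
    · rintro (⟨Q, hQ, rfl⟩ | ⟨Q, ⟨hQ, hc⟩, rfl⟩)
      · obtain ⟨h1, h2⟩ := ih.mp hQ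
        refine ⟨by simp [h1], ?_⟩
        intro a haQ
        rcases List.mem_cons.mp haQ with rfl | ha
        · exact ⟨by simp, by simp⟩
        · exact h2 a ha
      · obtain ⟨h1, h2⟩ := ih.mp hQ
        match Q, hc with
        | (y :: b) :: Q', hc =>
          have hyc : ℓ.idxOf x < ℓ.idxOf y := by
            simpa [condB] using hc
          refine ⟨by simpa [glue] using congrArg (x :: ·) h1, ?_⟩
          intro a haQ
          rcases List.mem_cons.mp haQ with rfl | ha
          · refine ⟨by simp, ?_⟩
            rw [List.isChain_cons_cons]
            exact ⟨hyc, (h2 _ (List.mem_cons_self)).2⟩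
          · exact h2 a (List.mem_cons_of_mem _ ha)
    · rintro ⟨h1, h2⟩
      match P with
      | [] => simp at h1
      | a :: P' =>
        have ha : a ≠ [] := (h2 a (List.mem_cons_self)).1
        match a with
        | [] => exact absurd rfl ha
        | z :: a' =>
          have hz : z = x ∧ a' ++ P'.flatten = t := by
            have : z :: (a' ++ P'.flatten) = x :: t := by simpa using h1
            exact ⟨by injection this, by injection this⟩
          obtain ⟨rfl, ht⟩ := hz
          match a' with
          | [] =>
            left
            refine ⟨P', ih.mpr ⟨by simpa using ht, fun b hb => h2 b (List.mem_cons_of_mem _ hb)⟩, rfl⟩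
          | y :: a'' =>
            right
            refine ⟨(y :: a'') :: P', ⟨ih.mpr ⟨by simpa using ht, ?_⟩, ?_⟩, rfl⟩
            · intro b hbQ
              rcases List.mem_cons.mp hbQ with rfl | hb
              · refine ⟨by simp, ?_⟩
                have := (h2 _ (List.mem_cons_self)).2
                rw [List.isChain_cons_cons] at this
                exact this.2
              · exact h2 b (List.mem_cons_of_mem _ hb)
            · have := (h2 _ (List.mem_cons_self)).2
              rw [List.isChain_cons_cons] at this
              simpa [condB, ascL] using this.1

theorem indexOf_inj {ℓ : List V} {u v : V} (hu : u ∈ ℓ) (_hv : v ∈ ℓ)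
    (h : ℓ.idxOf u = ℓ.idxOf v) : u = v := by
  have h1 : ℓ.idxOf u < ℓ.length := List.idxOf_lt_length_iff.2 hu
  have h2 : ℓ.idxOf v < ℓ.length := List.idxOf_lt_length_iff.2 _hv
  have e1 : ℓ[ℓ.idxOf u]? = some u := by
    rw [List.getElem?_eq_getElem h1, List.getElem_idxOf h1]
  have e2 : ℓ[ℓ.idxOf v]? = some v := by
    rw [List.getElem?_eq_getElem h2, List.getElem_idxOf h2]
  rw [h, e2] at e1
  exact (Option.some.injEq _ _ ▸ e1).symm

theorem splits_head {ℓ : List V} {y : V} {t : List V} {P : List (List V)}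
    (h : P ∈ splits ℓ (y :: t)) : ∃ a P', P = (y :: a) :: P' := by
  obtain ⟨h1, h2⟩ := mem_splits.mp h
  match P with
  | [] => simp at h1
  | [] :: P' => exact absurd rfl (h2 [] (List.mem_cons_self)).1
  | (z :: a) :: P' =>
    have : z :: (a ++ P'.flatten) = y :: t := by simpa using h1
    exact ⟨a, P', by rw [List.cons.injEq] at this; rw [this.1]⟩

theorem sum_splits {R : Type*} [CommRing R] (ℓ : List V) :
    ∀ m : List V, m.Nodup → (∀ v ∈ m, v ∈ ℓ) →
    ∑ P ∈ splits ℓ m, (-1 : R) ^ P.length =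
      if m.IsChain (fun u v => ℓ.idxOf v < ℓ.idxOf u) then (-1) ^ m.length else 0 := by
  intro m
  induction m with
  | nil => intro _ _; simp [splits_nil]
  | cons x t ih =>
    intro hnd hmem
    rw [splits_eq]
    have hdisj : Disjoint ((splits ℓ t).image (fun P => [x] :: P))
        (((splits ℓ t).filter (fun P => condB ℓ x P = true)).image (glue x)) := by
      rw [Finset.disjoint_left]
      rintro Q hQ1 hQ2
      obtain ⟨P1, _, rfl⟩ := Finset.mem_image.mp hQ1
      obtain ⟨P2, hP2, hg⟩ := Finset.mem_image.mp hQ2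
      rw [Finset.mem_filter] at hP2
      match P2, hP2.2 with
      | (z :: b) :: P2', _ =>
        simp only [glue, List.cons.injEq] at hg
        exact (by simp at hg : False)
    rw [Finset.sum_union hdisj]
    rw [Finset.sum_image (fun a _ b _ h => by simpa using h)]
    rw [Finset.sum_image (fun P hP Q hQ h => by
      rw [Finset.mem_coe, Finset.mem_filter] at hP hQ
      match P, Q, hP.2, hQ.2, h with
      | (z :: b) :: P', (w :: c) :: Q', _, _, h => simpa [glue] using h)]
    have e1 : ∑ P ∈ splits ℓ t, ((-1 : R)) ^ ([x] :: P).length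
        = -∑ P ∈ splits ℓ t, (-1 : R) ^ P.length := by
      rw [← Finset.sum_neg_distrib]
      refine Finset.sum_congr rfl fun P _ => by simp [pow_succ]
    have e2 : ∑ P ∈ (splits ℓ t).filter (fun P => condB ℓ x P = true),
          ((-1 : R)) ^ (glue x P).length
        = ∑ P ∈ (splits ℓ t).filter (fun P => condB ℓ x P = true), (-1 : R) ^ P.length := by
      refine Finset.sum_congr rfl fun P hP => ?_
      rw [Finset.mem_filter] at hP
      match P, hP.2 with
      | (z :: b) :: P', _ => rfl
    rw [e1, e2]
    have hmem' : ∀ v ∈ t, v ∈ ℓ := fun v hv => hmem v (List.mem_cons_of_mem _ hv)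
    have hnd' : t.Nodup := (List.nodup_cons.mp hnd).2
    cases t with
    | nil =>
      have : ({([] : List (List V))} : Finset _).filter (fun P => condB ℓ x P = true) = ∅ := by
        rw [Finset.filter_singleton, if_neg (by simp [condB])]
      simp [splits_nil, this]
    | cons y t' =>
      have hxy : x ≠ y := by
        intro h; exact (List.nodup_cons.mp hnd).1 (h ▸ (List.mem_cons_self (a := y) (l := t')))
      have hcond : ∀ P ∈ splits ℓ (y :: t'),
          (condB ℓ x P = true) ↔ (ℓ.idxOf x < ℓ.idxOf y) := by
        intro P hP
        obtain ⟨a, P', rfl⟩ := splits_head hP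
        simp [condB]
      by_cases hlt : ℓ.idxOf x < ℓ.idxOf y
      · rw [Finset.filter_true_of_mem (fun P hP => (hcond P hP).mpr hlt)]
        have hch : ¬ (x :: y :: t').IsChain (fun u v => ℓ.idxOf v < ℓ.idxOf u) := by
          rw [List.isChain_cons_cons]
          rintro ⟨h1, -⟩
          exact absurd hlt (lt_asymm h1)
        rw [if_neg hch]
        ring
      · rw [Finset.filter_false_of_mem (fun P hP => by
          rw [hcond P hP]; exact hlt)]
        have hyx : ℓ.idxOf y < ℓ.idxOf x := by
          rcases lt_trichotomy (ℓ.idxOf x) (ℓ.idxOf y) with h | h | h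
          · exact absurd h hlt
          · exact absurd (indexOf_inj (hmem x (List.mem_cons_self))
              (hmem y (List.mem_cons_of_mem _ (List.mem_cons_self))) h) hxy
          · exact h
        have hch : (x :: y :: t').IsChain (fun u v => ℓ.idxOf v < ℓ.idxOf u)
            ↔ (y :: t').IsChain (fun u v => ℓ.idxOf v < ℓ.idxOf u) := by
          rw [List.isChain_cons_cons]
          exact ⟨fun h => h.2, fun h => ⟨hyx, h⟩⟩
        rw [Finset.sum_empty, ih hnd' hmem']
        by_cases hc : (y :: t').IsChain (fun u v => ℓ.idxOf v < ℓ.idxOf u)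
        · rw [if_pos hc, if_pos (hch.mpr hc)]
          simp only [List.length_cons, pow_succ]
          ring
        · rw [if_neg hc, if_neg (fun h => hc (hch.mp h))]
          ring

theorem pairwise_ascL_self {ℓ : List V} (h : ℓ.Nodup) : ℓ.Pairwise (ascL ℓ) := by
  rw [List.pairwise_iff_getElem]
  intro i j hi hj hij
  unfold ascL
  rw [h.idxOf_getElem, h.idxOf_getElem]
  exact hij

theorem pairwise_rel_of_indexOf_lt {r : V → V → Prop} {a : List V} (hp : a.Pairwise r) {u v : V}
    (hu : u ∈ a) (hv : v ∈ a) (h : a.idxOf u < a.idxOf v) : r u v := by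
  rw [List.pairwise_iff_getElem] at hp
  have hu' : a.idxOf u < a.length := List.idxOf_lt_length_iff.2 hu
  have hv' : a.idxOf v < a.length := List.idxOf_lt_length_iff.2 hv
  have := hp _ _ hu' hv' h
  rwa [List.getElem_idxOf, List.getElem_idxOf] at this

theorem nodup_of_pairwise_ascL {ℓ a : List V} (ha : a.Pairwise (ascL ℓ)) : a.Nodup :=
  ha.imp fun h => fun e => absurd h (by rw [e]; exact lt_irrefl _)

theorem filter_recover {ℓ : List V} (hnd : ℓ.Nodup) (a : List V)
    (ha : a.Pairwise (ascL ℓ)) (hmem : ∀ v ∈ a, v ∈ ℓ) :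
    ℓ.filter (fun v => decide (v ∈ a)) = a := by
  have h1 : (ℓ.filter (fun v => decide (v ∈ a))).Nodup := hnd.filter _
  have h2 : a.Nodup := nodup_of_pairwise_ascL ha
  have h3 : (ℓ.filter (fun v => decide (v ∈ a))).toFinset = a.toFinset := by
    ext v
    simp only [List.mem_toFinset, List.mem_filter, decide_eq_true_eq]
    exact ⟨fun h => h.2, fun h => ⟨hmem v h, h⟩⟩
  have hperm := List.perm_of_nodup_nodup_toFinset_eq h1 h2 h3
  exact List.Perm.eq_of_pairwise'
    ((pairwise_ascL_self hnd).sublist (List.filter_sublist (l := ℓ))) ha hperm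

theorem foldr_union_map_toFinset : ∀ P : List (List V),
    ((P.map List.toFinset).foldr (· ∪ ·) ∅) = P.flatten.toFinset := by
  intro P
  induction P with
  | nil => simp
  | cons a P ih => simp [ih]

theorem flatten_idx {P : List (List V)} (hn : P.flatten.Nodup) :
    ∀ {i j : ℕ} (hi : i < P.length) (hj : j < P.length) {u v : V},
    u ∈ P[i] → v ∈ P[j] →
    (i < j ∨ (i = j ∧ P[i].idxOf u < P[i].idxOf v)) →
    P.flatten.idxOf u < P.flatten.idxOf v := by
  induction P with
  | nil => intro i j hi; exact absurd hi (Nat.not_lt_zero _)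
  | cons a P ih =>
    intro i j hi hj u v hu hv h
    have hfl : (a :: P).flatten = a ++ P.flatten := rfl
    rw [List.flatten_cons] at hn
    rw [List.nodup_append'] at hn
    obtain ⟨hna, hnP, hdisj⟩ := hn
    match i, j, hi, hj, hu, hv, h with
    | 0, 0, _, _, hu, hv, h =>
      simp only [List.getElem_cons_zero] at hu hv h
      rcases h with h | ⟨-, h⟩
      · exact absurd h (lt_irrefl _)
      · rw [List.flatten_cons, List.idxOf_append_of_mem hu, List.idxOf_append_of_mem hv]
        exact h
    | 0, k+1, _, hj, hu, hv, _ =>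
      simp only [List.getElem_cons_zero, List.getElem_cons_succ] at hu hv
      have hk : k < P.length := by simpa using hj
      have hvP : v ∈ P.flatten := List.mem_flatten.mpr ⟨P[k], List.getElem_mem _, hv⟩
      have hva : v ∉ a := fun hva => hdisj hva hvP
      rw [List.flatten_cons, List.idxOf_append_of_mem hu, List.idxOf_append_of_notMem hva]
      have := List.idxOf_lt_length_iff.2 hu
      omega
    | k+1, 0, _, _, _, _, h =>
      rcases h with h | ⟨h, -⟩ <;> omega
    | k+1, k'+1, hi, hj, hu, hv, h =>
      simp only [List.getElem_cons_succ] at hu hv h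
      have hk : k < P.length := by simpa using hi
      have hk' : k' < P.length := by simpa using hj
      have huP : u ∈ P.flatten := List.mem_flatten.mpr ⟨P[k], List.getElem_mem _, hu⟩
      have hvP : v ∈ P.flatten := List.mem_flatten.mpr ⟨P[k'], List.getElem_mem _, hv⟩
      have hua : u ∉ a := fun t => hdisj t huP
      have hva : v ∉ a := fun t => hdisj t hvP
      rw [List.flatten_cons, List.idxOf_append_of_notMem hua,
        List.idxOf_append_of_notMem hva]
      have : P.flatten.idxOf u < P.flatten.idxOf v := by
        apply ih hnP hk hk' hu hv
        rcases h with h | ⟨h, h2⟩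
        · exact Or.inl (by omega)
        · have hkk : k = k' := by omega
          subst hkk
          exact Or.inr ⟨rfl, h2⟩
      omega

theorem earlier_iff {ℓ m : List V} (hmnd : m.Nodup) {P : List (List V)} (hP : P ∈ splits ℓ m)
    {u v : V} (huv : ℓ.idxOf v < ℓ.idxOf u) (hu : u ∈ m) (hv : v ∈ m) :
    earlier (P.map List.toFinset) u v ↔ m.idxOf u < m.idxOf v := by
  obtain ⟨hfl, hparts⟩ := mem_splits.mp hP
  subst hfl
  constructor
  · rintro ⟨i, j, hij, hui, hvj⟩
    have hi : (i : ℕ) < P.length := by simpa using i.isLt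
    have hj : (j : ℕ) < P.length := by simpa using j.isLt
    rw [List.get_eq_getElem, List.getElem_map, List.mem_toFinset] at hui hvj
    exact flatten_idx hmnd hi hj hui hvj (Or.inl hij)
  · intro hlt
    obtain ⟨ia, hia, hui⟩ : ∃ a ∈ P, u ∈ a := List.mem_flatten.mp hu
    obtain ⟨jb, hjb, hvj⟩ : ∃ a ∈ P, v ∈ a := List.mem_flatten.mp hv
    obtain ⟨i, hi, rfl⟩ := List.mem_iff_getElem.mp hia
    obtain ⟨j, hj, rfl⟩ := List.mem_iff_getElem.mp hjb
    have hlen : (P.map List.toFinset).length = P.length := by simp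
    rcases lt_trichotomy i j with hij | hij | hij
    · exact ⟨⟨i, by omega⟩, ⟨j, by omega⟩, by simpa using hij, by
        rw [List.get_eq_getElem, List.getElem_map, List.mem_toFinset]; exact hui, by
        rw [List.get_eq_getElem, List.getElem_map, List.mem_toFinset]; exact hvj⟩
    · subst hij
      exfalso
      have hpw : P[i].Pairwise (ascL ℓ) :=
        List.isChain_iff_pairwise.mp (hparts _ (List.getElem_mem _)).2
      rcases lt_trichotomy (P[i].idxOf u) (P[i].idxOf v) with h | h | h
      · exact absurd (pairwise_rel_of_indexOf_lt hpw hui hvj h) (fun t => lt_asymm t huv)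
      · have : u = v := by
          have h1 : P[i].idxOf u < P[i].length := List.idxOf_lt_length_iff.2 hui
          have e1 : P[i][P[i].idxOf u] = u := List.getElem_idxOf h1
          have h2 : P[i].idxOf v < P[i].length := List.idxOf_lt_length_iff.2 hvj
          have e2 : P[i][P[i].idxOf v] = v := List.getElem_idxOf h2
          rw [← e1, ← e2]
          congr 1
        exact absurd huv (by rw [this]; exact lt_irrefl _)
      · exact absurd (flatten_idx hmnd hj hj hvj hui (Or.inr ⟨rfl, h⟩)) (fun t => lt_asymm t hlt)
    · exact absurd (flatten_idx hmnd hj hi hvj hui (Or.inl hij)) (fun t => lt_asymm t hlt)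

theorem comp_to_split [Fintype V] {ℓ : List V} (hℓ : IsLinList ℓ) {C : List (Finset V)}
    (hC : IsComposition Finset.univ C) :
    (C.map fun B => ℓ.filter fun v => v ∈ B) ∈ splits ℓ (linOfComp ℓ C) ∧
    ((C.map fun B => ℓ.filter fun v => v ∈ B).map List.toFinset) = C := by
  constructor
  · rw [mem_splits]
    refine ⟨rfl, ?_⟩
    intro a ha
    obtain ⟨B, hB, rfl⟩ := List.mem_map.mp ha
    constructor
    · obtain ⟨w, hw⟩ := hC.1 B hB
      exact List.ne_nil_of_mem (List.mem_filter.mpr ⟨hℓ.2 w, by simpa using hw⟩)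
    · exact ((pairwise_ascL_self hℓ.1).sublist (List.filter_sublist (l := ℓ))).isChain
  · rw [List.map_map]
    have : ∀ B ∈ C, (List.toFinset ∘ fun B => ℓ.filter fun v => v ∈ B) B = id B := by
      intro B _
      ext v
      simp [List.mem_filter, hℓ.2 v]
    rw [List.map_congr_left this, List.map_id]

theorem split_to_comp [Fintype V] {ℓ m : List V} (hℓ : IsLinList ℓ) (hmnd : m.Nodup)
    (hmu : m.toFinset = Finset.univ) {P : List (List V)} (hP : P ∈ splits ℓ m) :
    (IsComposition Finset.univ (P.map List.toFinset) ∧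
      linOfComp ℓ (P.map List.toFinset) = m) ∧
    (P.map List.toFinset).map (fun B => ℓ.filter fun v => v ∈ B) = P := by
  obtain ⟨hfl, hparts⟩ := mem_splits.mp hP
  have hphi : (P.map List.toFinset).map (fun B => ℓ.filter fun v => v ∈ B) = P := by
    rw [List.map_map]
    have : ∀ a ∈ P, ((fun B => ℓ.filter fun v => v ∈ B) ∘ List.toFinset) a = id a := by
      intro a ha
      have h1 : ℓ.filter (fun v => decide (v ∈ a.toFinset)) =
          ℓ.filter (fun v => decide (v ∈ a)) :=
        List.filter_congr (fun v _ => by simp)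
      have h2 := filter_recover hℓ.1 a (List.isChain_iff_pairwise.mp (hparts a ha).2)
        (fun v _ => hℓ.2 v)
      simpa [Function.comp] using h1.trans h2
    rw [List.map_congr_left this, List.map_id]
  refine ⟨⟨⟨?_, ?_, ?_⟩, ?_⟩, hphi⟩
  · intro B hB
    obtain ⟨a, ha, rfl⟩ := List.mem_map.mp hB
    obtain ⟨w, hw⟩ := List.exists_mem_of_ne_nil a (hparts a ha).1
    exact ⟨w, List.mem_toFinset.mpr hw⟩
  · have := (List.nodup_flatten.mp (hfl ▸ hmnd)).2
    exact List.Pairwise.map _ (fun {a b} h => List.disjoint_toFinset_iff_disjoint.mpr h) this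
  · rw [foldr_union_map_toFinset, hfl, hmu]
  · unfold linOfComp
    rw [hphi, hfl]

theorem indexOf_reverse {ℓ : List V} (hnd : ℓ.Nodup) {v : V} (hv : v ∈ ℓ) :
    ℓ.reverse.idxOf v = ℓ.length - 1 - ℓ.idxOf v := by
  have hi : ℓ.idxOf v < ℓ.length := List.idxOf_lt_length_iff.2 hv
  have hlen : ℓ.reverse.length = ℓ.length := List.length_reverse
  have hb : ℓ.length - 1 - ℓ.idxOf v < ℓ.reverse.length := by omega
  have h2 : ℓ.reverse[ℓ.length - 1 - ℓ.idxOf v] = v := by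
    rw [List.getElem_reverse]
    have h4 : ℓ[ℓ.length - 1 - (ℓ.length - 1 - ℓ.idxOf v)]? = some v := by
      rw [show ℓ.length - 1 - (ℓ.length - 1 - ℓ.idxOf v) = ℓ.idxOf v from by omega,
        List.getElem?_eq_getElem hi, List.getElem_idxOf hi]
    rw [List.getElem?_eq_getElem (by omega)] at h4
    exact Option.some_injective _ h4
  calc ℓ.reverse.idxOf v = ℓ.reverse.idxOf (ℓ.reverse[ℓ.length - 1 - ℓ.idxOf v]) := by
        rw [h2]
    _ = ℓ.length - 1 - ℓ.idxOf v := (List.nodup_reverse.mpr hnd).idxOf_getElem _ hb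

theorem chain'_desc_iff {ℓ m : List V} (hℓ : IsLinList ℓ) (hm : IsLinList m) :
    m.IsChain (fun u v => ℓ.idxOf v < ℓ.idxOf u) ↔ m = ℓ.reverse := by
  haveI : IsTrans V (fun u v => ℓ.idxOf v < ℓ.idxOf u) :=
    ⟨fun _ _ _ h1 h2 => lt_trans h2 h1⟩
  haveI : IsAntisymm V (fun u v => ℓ.idxOf v < ℓ.idxOf u) :=
    ⟨fun _ _ h1 h2 => absurd (lt_trans h1 h2) (lt_irrefl _)⟩
  have hrevp : ℓ.reverse.Pairwise (fun u v => ℓ.idxOf v < ℓ.idxOf u) := by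
    rw [List.pairwise_reverse]
    exact pairwise_ascL_self hℓ.1
  constructor
  · intro h
    have hperm : m.Perm ℓ.reverse := by
      apply List.perm_of_nodup_nodup_toFinset_eq hm.1 (List.nodup_reverse.mpr hℓ.1)
      ext v
      simp [hm.2 v, hℓ.2 v]
    exact List.Perm.eq_of_pairwise' (List.isChain_iff_pairwise.mp h) hrevp hperm
  · rintro rfl
    exact hrevp.isChain

theorem ncard_adj_pairs [Fintype V] (H : SimpleGraph V) {ℓ : List V} (hℓ : IsLinList ℓ) :
    {p : V × V | H.Adj p.1 p.2 ∧ ℓ.idxOf p.2 < ℓ.idxOf p.1}.ncard = H.edgeSet.ncard := by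
  have himg : (fun p : V × V => s(p.1, p.2)) ''
      {p : V × V | H.Adj p.1 p.2 ∧ ℓ.idxOf p.2 < ℓ.idxOf p.1} = H.edgeSet := by
    ext e
    induction e using Sym2.ind with
    | _ u v =>
      constructor
      · rintro ⟨⟨a, b⟩, ⟨hadj, -⟩, heq⟩
        rw [← heq]
        exact hadj
      · intro he
        have hadj : H.Adj u v := he
        have hne : u ≠ v := hadj.ne
        have hine : ℓ.idxOf u ≠ ℓ.idxOf v :=
          fun h => hne (indexOf_inj (hℓ.2 u) (hℓ.2 v) h)
        rcases lt_or_gt_of_ne hine with h | h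
        · exact ⟨(v, u), ⟨hadj.symm, h⟩, Sym2.eq_swap⟩
        · exact ⟨(u, v), ⟨hadj, h⟩, rfl⟩
  have hinj : Set.InjOn (fun p : V × V => s(p.1, p.2))
      {p : V × V | H.Adj p.1 p.2 ∧ ℓ.idxOf p.2 < ℓ.idxOf p.1} := by
    rintro ⟨a, b⟩ ⟨-, hab⟩ ⟨c, d⟩ ⟨-, hcd⟩ h
    simp only [Sym2.eq_iff] at h
    rcases h with ⟨rfl, rfl⟩ | ⟨rfl, rfl⟩
    · rfl
    · exact absurd hcd (lt_asymm hab)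
  rw [← himg, Set.ncard_image_of_injOn hinj]

end AuxAntipode

theorem antipode_linear_orders {V : Type*} [Fintype V] [DecidableEq V] [Nonempty V]
    (G : SimpleGraph V) (ℓ : List V) (hℓ : IsLinList ℓ)
    (m : List V) (hm : IsLinList m) :
    (m = ℓ.reverse →
      ∑ᶠ C ∈ {C : List (Finset V) | IsComposition Finset.univ C ∧ linOfComp ℓ C = m},
          ((-1 : MvPolynomial (Fin 2) ℤ)) ^ C.length *
            (MvPolynomial.X 0) ^
              {p : V × V | earlier C p.1 p.2 ∧ G.Adj p.1 p.2 ∧ after ℓ p.1 p.2}.ncard *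
            (MvPolynomial.X 1) ^
              {p : V × V | earlier C p.1 p.2 ∧ p.1 ≠ p.2 ∧ ¬ G.Adj p.1 p.2 ∧
                after ℓ p.1 p.2}.ncard =
        (-1 : MvPolynomial (Fin 2) ℤ) ^ Fintype.card V *
          (MvPolynomial.X 0) ^ G.edgeSet.ncard * (MvPolynomial.X 1) ^ Gᶜ.edgeSet.ncard) ∧
    (m ≠ ℓ.reverse →
      ∑ᶠ C ∈ {C : List (Finset V) | IsComposition Finset.univ C ∧ linOfComp ℓ C = m},
          ((-1 : MvPolynomial (Fin 2) ℤ)) ^ C.length *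
            (MvPolynomial.X 0) ^
              {p : V × V | earlier C p.1 p.2 ∧ G.Adj p.1 p.2 ∧ after ℓ p.1 p.2}.ncard *
            (MvPolynomial.X 1) ^
              {p : V × V | earlier C p.1 p.2 ∧ p.1 ≠ p.2 ∧ ¬ G.Adj p.1 p.2 ∧
                after ℓ p.1 p.2}.ncard = 0) := by
  classical
  have hmu : m.toFinset = Finset.univ := by ext v; simp [hm.2 v]
  have hset : {C : List (Finset V) | IsComposition Finset.univ C ∧ linOfComp ℓ C = m} =
      ↑((splits ℓ m).image (fun P => P.map List.toFinset)) := by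
    ext C
    simp only [Set.mem_setOf_eq, Finset.coe_image, Set.mem_image, Finset.mem_coe]
    constructor
    · rintro ⟨h1, h2⟩
      obtain ⟨hmem, hpsi⟩ := comp_to_split hℓ h1
      rw [h2] at hmem
      exact ⟨_, hmem, hpsi⟩
    · rintro ⟨P, hP, rfl⟩
      exact (split_to_comp hℓ hm.1 hmu hP).1
  have hinj : ∀ P ∈ splits ℓ m, ∀ Q ∈ splits ℓ m,
      P.map List.toFinset = Q.map List.toFinset → P = Q := by
    intro P hP Q hQ h
    have h1 := (split_to_comp hℓ hm.1 hmu hP).2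
    have h2 := (split_to_comp hℓ hm.1 hmu hQ).2
    rw [← h1, ← h2, h]
  have key : ∑ᶠ C ∈ {C : List (Finset V) | IsComposition Finset.univ C ∧ linOfComp ℓ C = m},
          ((-1 : MvPolynomial (Fin 2) ℤ)) ^ C.length *
            (MvPolynomial.X 0) ^
              {p : V × V | earlier C p.1 p.2 ∧ G.Adj p.1 p.2 ∧ after ℓ p.1 p.2}.ncard *
            (MvPolynomial.X 1) ^
              {p : V × V | earlier C p.1 p.2 ∧ p.1 ≠ p.2 ∧ ¬ G.Adj p.1 p.2 ∧
                after ℓ p.1 p.2}.ncard =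
      (if m = ℓ.reverse then (-1 : MvPolynomial (Fin 2) ℤ) ^ m.length else 0) *
        ((MvPolynomial.X 0 : MvPolynomial (Fin 2) ℤ) ^
            {p : V × V | m.idxOf p.1 < m.idxOf p.2 ∧ G.Adj p.1 p.2 ∧
              after ℓ p.1 p.2}.ncard *
         (MvPolynomial.X 1 : MvPolynomial (Fin 2) ℤ) ^
            {p : V × V | m.idxOf p.1 < m.idxOf p.2 ∧ p.1 ≠ p.2 ∧ ¬ G.Adj p.1 p.2 ∧
              after ℓ p.1 p.2}.ncard) := by
    rw [hset, finsum_mem_coe_finset, Finset.sum_image hinj]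
    have hterm : ∀ P ∈ splits ℓ m,
        ((-1 : MvPolynomial (Fin 2) ℤ)) ^ (P.map List.toFinset).length *
          (MvPolynomial.X 0) ^
            {p : V × V | earlier (P.map List.toFinset) p.1 p.2 ∧ G.Adj p.1 p.2 ∧
              after ℓ p.1 p.2}.ncard *
          (MvPolynomial.X 1) ^
            {p : V × V | earlier (P.map List.toFinset) p.1 p.2 ∧ p.1 ≠ p.2 ∧
              ¬ G.Adj p.1 p.2 ∧ after ℓ p.1 p.2}.ncard =
        ((-1 : MvPolynomial (Fin 2) ℤ)) ^ P.length *
          ((MvPolynomial.X 0 : MvPolynomial (Fin 2) ℤ) ^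
              {p : V × V | m.idxOf p.1 < m.idxOf p.2 ∧ G.Adj p.1 p.2 ∧
                after ℓ p.1 p.2}.ncard *
           (MvPolynomial.X 1 : MvPolynomial (Fin 2) ℤ) ^
              {p : V × V | m.idxOf p.1 < m.idxOf p.2 ∧ p.1 ≠ p.2 ∧ ¬ G.Adj p.1 p.2 ∧
                after ℓ p.1 p.2}.ncard) := by
      intro P hP
      have hs1 : {p : V × V | earlier (P.map List.toFinset) p.1 p.2 ∧ G.Adj p.1 p.2 ∧
          after ℓ p.1 p.2} = {p : V × V | m.idxOf p.1 < m.idxOf p.2 ∧ G.Adj p.1 p.2 ∧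
          after ℓ p.1 p.2} := by
        ext ⟨u, v⟩
        simp only [Set.mem_setOf_eq]
        constructor
        · rintro ⟨he, ha, hf⟩
          exact ⟨(earlier_iff hm.1 hP hf (hm.2 u) (hm.2 v)).mp he, ha, hf⟩
        · rintro ⟨he, ha, hf⟩
          exact ⟨(earlier_iff hm.1 hP hf (hm.2 u) (hm.2 v)).mpr he, ha, hf⟩
      have hs2 : {p : V × V | earlier (P.map List.toFinset) p.1 p.2 ∧ p.1 ≠ p.2 ∧
          ¬ G.Adj p.1 p.2 ∧ after ℓ p.1 p.2} =
          {p : V × V | m.idxOf p.1 < m.idxOf p.2 ∧ p.1 ≠ p.2 ∧ ¬ G.Adj p.1 p.2 ∧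
          after ℓ p.1 p.2} := by
        ext ⟨u, v⟩
        simp only [Set.mem_setOf_eq]
        constructor
        · rintro ⟨he, hn, ha, hf⟩
          exact ⟨(earlier_iff hm.1 hP hf (hm.2 u) (hm.2 v)).mp he, hn, ha, hf⟩
        · rintro ⟨he, hn, ha, hf⟩
          exact ⟨(earlier_iff hm.1 hP hf (hm.2 u) (hm.2 v)).mpr he, hn, ha, hf⟩
      rw [hs1, hs2, List.length_map, mul_assoc]
    rw [Finset.sum_congr rfl hterm, ← Finset.sum_mul,
      sum_splits ℓ m hm.1 (fun v _ => hℓ.2 v)]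
    rw [if_congr (chain'_desc_iff hℓ hm) rfl rfl]
  constructor
  · intro hrev
    rw [key, if_pos hrev]
    subst hrev
    have hlen : ℓ.reverse.length = Fintype.card V := by
      rw [← Finset.card_univ, ← hmu, List.toFinset_card_of_nodup hm.1]
    have hidx : ∀ u v : V, ℓ.idxOf v < ℓ.idxOf u →
        ℓ.reverse.idxOf u < ℓ.reverse.idxOf v := by
      intro u v h
      rw [indexOf_reverse hℓ.1 (hℓ.2 u), indexOf_reverse hℓ.1 (hℓ.2 v)]
      have h1 := List.idxOf_lt_length_iff.2 (hℓ.2 u)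
      have h2 := List.idxOf_lt_length_iff.2 (hℓ.2 v)
      omega
    have hA : {p : V × V | ℓ.reverse.idxOf p.1 < ℓ.reverse.idxOf p.2 ∧ G.Adj p.1 p.2 ∧
        after ℓ p.1 p.2} = {p : V × V | G.Adj p.1 p.2 ∧ ℓ.idxOf p.2 < ℓ.idxOf p.1} := by
      ext ⟨u, v⟩
      simp only [Set.mem_setOf_eq]
      exact ⟨fun h => ⟨h.2.1, h.2.2⟩, fun h => ⟨hidx u v h.2, h.1, h.2⟩⟩
    have hB : {p : V × V | ℓ.reverse.idxOf p.1 < ℓ.reverse.idxOf p.2 ∧ p.1 ≠ p.2 ∧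
        ¬ G.Adj p.1 p.2 ∧ after ℓ p.1 p.2} =
        {p : V × V | Gᶜ.Adj p.1 p.2 ∧ ℓ.idxOf p.2 < ℓ.idxOf p.1} := by
      ext ⟨u, v⟩
      simp only [Set.mem_setOf_eq, SimpleGraph.compl_adj]
      exact ⟨fun h => ⟨⟨h.2.1, h.2.2.1⟩, h.2.2.2⟩,
        fun h => ⟨hidx u v h.2, h.1.1, h.1.2, h.2⟩⟩
    rw [hA, hB, ncard_adj_pairs G hℓ, ncard_adj_pairs Gᶜ hℓ, hlen, mul_assoc]
  · intro hrev
    rw [key, if_neg hrev, zero_mul]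


end GraphSpecies
end
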